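/- Let Λ_0 be a ring, Λ_1 a Λ_0-bimodule, and Λ = T(Λ_0, Λ_1) the tensor ring ⊕_{r≥0} Λ_1^{⊗_{Λ_0} r}. For every right Λ-module M there is a short exact sequence of Λ-modules 0 → M ⊗_{Λ_0} Λ_1 ⊗_{Λ_0} Λ → M ⊗_{Λ_0} Λ → M → 0, where the right map is m ⊗ λ ↦ m·λ and the left map is m ⊗ μ ⊗ λ ↦ m ⊗ (μ ⊗ λ) - (m·μ) ⊗ λ. -/

import Mathlib

open TensorProduct

noncomputable section SesAux
variable (R M₁ X : Type) [CommRing R]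
    [AddCommGroup M₁] [Module R M₁] [AddCommGroup X] [Module R X]
    [Module (TensorAlgebra R M₁) X] [IsScalarTower R (TensorAlgebra R M₁) X]

local notation "A" => TensorAlgebra R M₁
local notation "P" => TensorAlgebra R M₁ ⊗[R] (M₁ ⊗[R] X)

/-- ε : A ⊗ X → X, l ⊗ x ↦ l • x -/
def sesε : A ⊗[R] X →ₗ[R] X :=
  TensorProduct.lift (Algebra.lsmul R R X).toLinearMap

@[simp] lemma sesε_tmul (l : A) (x : X) : sesε R M₁ X (l ⊗ₜ x) = l • x := rfl

/-- δ : A ⊗ (M₁ ⊗ X) → A ⊗ X -/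
def sesδ : P →ₗ[R] A ⊗[R] X :=
  (LinearMap.rTensor X ((LinearMap.mul' R A) ∘ₗ LinearMap.lTensor A (TensorAlgebra.ι R)))
      ∘ₗ (TensorProduct.assoc R A M₁ X).symm.toLinearMap
    - LinearMap.lTensor A (sesε R M₁ X ∘ₗ LinearMap.rTensor X (TensorAlgebra.ι R))

@[simp] lemma sesδ_tmul (l : A) (μ : M₁) (x : X) :
    sesδ R M₁ X (l ⊗ₜ (μ ⊗ₜ x))
      = (l * TensorAlgebra.ι R μ) ⊗ₜ x - l ⊗ₜ (TensorAlgebra.ι R μ • x) := by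
  simp [sesδ]

/-- generator map for the homotopy algebra morphism -/
def sesg : M₁ →ₗ[R] Module.End R (P × X) where
  toFun μ :=
    LinearMap.prod
      ((Algebra.lsmul R R P (TensorAlgebra.ι R μ)) ∘ₗ LinearMap.fst R P X
        + (TensorProduct.mk R A (M₁ ⊗[R] X) 1
            ∘ₗ TensorProduct.mk R M₁ X μ) ∘ₗ LinearMap.snd R P X)
      ((Algebra.lsmul R R X (TensorAlgebra.ι R μ)) ∘ₗ LinearMap.snd R P X)
  map_add' μ ν := by
    ext v <;>
      simp [TensorProduct.add_tmul, TensorProduct.tmul_add, add_smul]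
  map_smul' r μ := by
    refine LinearMap.ext fun v => Prod.ext ?_ ?_ <;> dsimp only [LinearMap.prod_apply,
      LinearMap.add_apply, LinearMap.coe_comp, Function.comp_apply, LinearMap.fst_apply,
      LinearMap.snd_apply, LinearMap.smul_apply, RingHom.id_apply, Function.prod, Algebra.lsmul_coe,
      TensorProduct.mk_apply, LinearMap.coe_prod]
    · rw [← TensorProduct.smul_tmul', TensorProduct.tmul_smul, map_smul, smul_assoc]
      simp [smul_add]
    · simp [map_smul, smul_assoc]

def sesΦ : A →ₐ[R] Module.End R (P × X) := TensorAlgebra.lift R (sesg R M₁ X)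

lemma sesΦ_ι (μ : M₁) (v : P × X) :
    sesΦ R M₁ X (TensorAlgebra.ι R μ) v
      = (TensorAlgebra.ι R μ • v.1 + (1 : A) ⊗ₜ (μ ⊗ₜ v.2),
         TensorAlgebra.ι R μ • v.2) := by
  simp [sesΦ, sesg]

lemma sesΦ_inl (a : A) (p : P) : sesΦ R M₁ X a (p, 0) = (a • p, 0) := by
  induction a using TensorAlgebra.induction generalizing p with
  | algebraMap r => simp [algebraMap_smul]
  | ι μ => simp [sesΦ_ι]
  | mul a b ha hb => rw [map_mul]; simp only [Module.End.mul_apply, hb, ha, mul_smul]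
  | add a b ha hb => simp [map_add, ha, hb, add_smul]

lemma sesΦ_snd (a : A) (v : P × X) : (sesΦ R M₁ X a v).2 = a • v.2 := by
  induction a using TensorAlgebra.induction generalizing v with
  | algebraMap r => simp [algebraMap_smul]
  | ι μ => simp [sesΦ_ι]
  | mul a b ha hb => rw [map_mul]; simp only [Module.End.mul_apply, hb, ha, mul_smul]
  | add a b ha hb => simp [map_add, ha, hb, add_smul]

/-- the homotopy, bilinear form -/
def sesH : A →ₗ[R] X →ₗ[R] P where
  toFun a := LinearMap.fst R P X ∘ₗ (sesΦ R M₁ X a) ∘ₗ LinearMap.inr R P X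
  map_add' a b := by ext x; simp [map_add]
  map_smul' r a := by ext x; simp [map_smul]

lemma sesH_one (x : X) : sesH R M₁ X 1 x = 0 := by
  simp [sesH]

lemma sesH_ι (μ : M₁) (x : X) : sesH R M₁ X (TensorAlgebra.ι R μ) x = (1 : A) ⊗ₜ (μ ⊗ₜ x) := by
  simp [sesH, sesΦ_ι]

lemma sesH_mul (a b : A) (x : X) :
    sesH R M₁ X (a * b) x = a • sesH R M₁ X b x + sesH R M₁ X a (b • x) := by
  have key : sesΦ R M₁ X b (0, x) = (sesH R M₁ X b x, b • x) := by
    have h2 := sesΦ_snd R M₁ X b ((0:P), x)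
    have h1 : (sesΦ R M₁ X b (0, x)).1 = sesH R M₁ X b x := rfl
    rw [Prod.ext_iff]; exact ⟨h1, by simpa using h2⟩
  have expand : ((sesH R M₁ X b x : P), b • x)
      = ((sesH R M₁ X b x, (0:X)) + ((0:P), b • x)) := by simp
  have hab : sesH R M₁ X (a*b) x = (sesΦ R M₁ X (a*b) (0, x)).1 := rfl
  rw [hab, map_mul, Module.End.mul_apply, key, expand, map_add, sesΦ_inl, Prod.fst_add]
  rfl

/-- the homotopy -/
def sesh : A ⊗[R] X →ₗ[R] P := TensorProduct.lift (sesH R M₁ X)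

lemma sesδ_smul (a : A) (u : P) : sesδ R M₁ X (a • u) = a • sesδ R M₁ X u := by
  induction u with
  | zero => simp
  | add u v hu hv => simp [smul_add, hu, hv]
  | tmul l t =>
    induction t with
    | zero => simp
    | add s t hs ht =>
        rw [TensorProduct.tmul_add, smul_add, map_add, map_add, hs, ht, smul_add]
    | tmul μ x =>
        rw [TensorProduct.smul_tmul']
        simp only [sesδ_tmul, smul_sub, TensorProduct.smul_tmul', smul_eq_mul, mul_assoc]

lemma ses_hδ (u : P) : sesh R M₁ X (sesδ R M₁ X u) = u := by
  induction u with
  | zero => simp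
  | add u v hu hv => simp [hu, hv]
  | tmul l t =>
    induction t with
    | zero => simp
    | add s t hs ht => rw [TensorProduct.tmul_add, map_add, map_add, hs, ht]
    | tmul μ x =>
        rw [sesδ_tmul, map_sub]
        simp only [sesh, TensorProduct.lift.tmul]
        rw [sesH_mul, sesH_ι]
        rw [TensorProduct.smul_tmul', smul_eq_mul, mul_one]
        abel

lemma ses_δh (y : A ⊗[R] X) :
    sesδ R M₁ X (sesh R M₁ X y) = y - (1 : A) ⊗ₜ sesε R M₁ X y := by
  induction y with
  | zero => simp
  | add u v hu hv =>
      rw [map_add, map_add, hu, hv, map_add, TensorProduct.tmul_add]; abel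
  | tmul l x =>
    simp only [sesh, TensorProduct.lift.tmul, sesε_tmul]
    induction l using TensorAlgebra.induction generalizing x with
    | algebraMap r =>
        have h1 : (algebraMap R A r : A) = r • (1 : A) := Algebra.algebraMap_eq_smul_one r
        rw [h1, map_smul, LinearMap.smul_apply, sesH_one, smul_zero, map_zero,
          smul_assoc, one_smul, TensorProduct.tmul_smul, ← TensorProduct.smul_tmul', sub_self]
    | ι μ => rw [sesH_ι, sesδ_tmul, one_mul]
    | add a b ha hb =>
        rw [map_add, LinearMap.add_apply, map_add, ha, hb, TensorProduct.add_tmul, add_smul,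
          TensorProduct.tmul_add]
        abel
    | mul a b ha hb =>
        rw [sesH_mul, map_add, sesδ_smul, ha, hb, smul_sub, mul_smul]
        rw [TensorProduct.smul_tmul', smul_eq_mul, TensorProduct.smul_tmul', smul_eq_mul, mul_one]
        abel

end SesAux

theorem tensor_ring_standard_ses (R M₁ X : Type) [CommRing R]
    [AddCommGroup M₁] [Module R M₁] [AddCommGroup X] [Module R X]
    [Module (TensorAlgebra R M₁) X] [IsScalarTower R (TensorAlgebra R M₁) X] :
    ∃ (δ : TensorAlgebra R M₁ ⊗[R] (M₁ ⊗[R] X) →ₗ[R] TensorAlgebra R M₁ ⊗[R] X)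
      (ε : TensorAlgebra R M₁ ⊗[R] X →ₗ[R] X),
      (∀ (l : TensorAlgebra R M₁) (μ : M₁) (x : X),
        δ (l ⊗ₜ (μ ⊗ₜ x)) = (l * TensorAlgebra.ι R μ) ⊗ₜ x - l ⊗ₜ (TensorAlgebra.ι R μ • x)) ∧
      (∀ (l : TensorAlgebra R M₁) (x : X), ε (l ⊗ₜ x) = l • x) ∧
      Function.Injective δ ∧ Function.Exact δ ε ∧ Function.Surjective ε := by
  refine ⟨sesδ R M₁ X, sesε R M₁ X, fun l μ x => sesδ_tmul R M₁ X l μ x,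
    fun l x => rfl, ?_, ?_, fun x => ⟨(1 : TensorAlgebra R M₁) ⊗ₜ x, one_smul _ x⟩⟩
  · intro u v huv
    have := congrArg (sesh R M₁ X) huv
    rwa [ses_hδ, ses_hδ] at this
  · intro y
    constructor
    · intro hy
      refine ⟨sesh R M₁ X y, ?_⟩
      rw [ses_δh, hy, TensorProduct.tmul_zero, sub_zero]
    · rintro ⟨u, rfl⟩
      induction u with
      | zero => simp
      | add u v hu hv => rw [map_add, map_add, hu, hv, add_zero]
      | tmul l t =>
        induction t with
        | zero => simp
        | add s t hs ht => rw [TensorProduct.tmul_add, map_add, map_add, hs, ht, add_zero]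
        | tmul μ x => rw [sesδ_tmul, map_sub, sesε_tmul, sesε_tmul, mul_smul, sub_self]
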